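/- Let A_1, ..., A_m be positive definite real symmetric n×n matrices, let x ∈ ℝ^m be entrywise nonnegative, and let B be a positive definite real symmetric n×n matrix. Set N = Σ_{i=1}^m x_i A_i, M = Σ_{i=1}^m tr(A_i B) A_i, and S = B # M^{-1} = B^{1/2} (B^{-1/2} M^{-1} B^{-1/2})^{1/2} B^{1/2}. If B = S N S (i.e., B is a fixed point of the multiplicative update), then M = N; that is, Σ_{i=1}^m tr(A_i B) A_i = Σ_{i=1}^m x_i A_i, so B satisfies the first-order stationarity condition 𝒜^T 𝒜 B = 𝒜^T x. (Theorem 4 of the paper, specialized to the positive semidefinite cone.) -/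

import Mathlib

open Matrix BigOperators

/- `msqrt A` is the positive semidefinite square root of `A` (junk value `0` when `A` is
not positive semidefinite). -/
open Classical in
noncomputable def msqrt {n : ℕ} (A : Matrix (Fin n) (Fin n) ℝ) : Matrix (Fin n) (Fin n) ℝ :=
  if h : A.PosSemidef then (h.1.eigenvectorUnitary : Matrix (Fin n) (Fin n) ℝ) *
    diagonal ((↑) ∘ (√·) ∘ h.1.eigenvalues) * (star h.1.eigenvectorUnitary : Matrix (Fin n) (Fin n) ℝ)
  else 0

/- The matrix geometric mean `X # Y = X^{1/2} (X^{-1/2} Y X^{-1/2})^{1/2} X^{1/2}`. -/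
noncomputable def gmean {n : ℕ} (X Y : Matrix (Fin n) (Fin n) ℝ) : Matrix (Fin n) (Fin n) ℝ :=
  msqrt X * msqrt (msqrt X⁻¹ * Y * msqrt X⁻¹) * msqrt X

namespace Aux

variable {n : ℕ}

lemma detU {P : Matrix (Fin n) (Fin n) ℝ} (h : P.PosDef) : IsUnit P.det :=
  isUnit_iff_ne_zero.mpr h.det_pos.ne'

lemma posDef_of_posSemidef_det {P : Matrix (Fin n) (Fin n) ℝ}
    (h : P.PosSemidef) (hd : IsUnit P.det) : P.PosDef := by
  refine posDef_iff_dotProduct_mulVec.mpr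
    ⟨h.1, fun v hv => lt_of_le_of_ne ((posSemidef_iff_dotProduct_mulVec.mp h).2 v) fun he => hv ?_⟩
  have h0 : P *ᵥ v = 0 := (h.dotProduct_mulVec_zero_iff v).mp he.symm
  have := congrArg (fun w => P⁻¹ *ᵥ w) h0
  simpa [Matrix.mulVec_mulVec, Matrix.nonsing_inv_mul P hd] using this

open scoped MatrixOrder in
lemma msqrt_eq_sqrt {P : Matrix (Fin n) (Fin n) ℝ} (h : P.PosSemidef) :
    msqrt P = CFC.sqrt P := by
  rw [CFC.sqrt_eq_real_sqrt P h.nonneg, cfcₙ_eq_cfc, h.1.cfc_eq, IsHermitian.cfc, msqrt, dif_pos h]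
  rfl

open scoped MatrixOrder in
lemma msqrt_eq_of_sq {P Q : Matrix (Fin n) (Fin n) ℝ} (hP : P.PosSemidef) (hQ : Q.PosSemidef)
    (h : Q * Q = P) : msqrt P = Q := by
  rw [msqrt_eq_sqrt hP]
  exact CFC.sqrt_unique h hQ.nonneg

open scoped MatrixOrder in
lemma msqrt_posDef {P : Matrix (Fin n) (Fin n) ℝ} (h : P.PosDef) :
    (msqrt P).PosDef ∧ msqrt P * msqrt P = P := by
  rw [msqrt_eq_sqrt h.posSemidef]
  have hsq := CFC.sqrt_mul_sqrt_self P h.posSemidef.nonneg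
  have hdet : (CFC.sqrt P).det * (CFC.sqrt P).det = P.det := by
    rw [← Matrix.det_mul, hsq]
  refine ⟨posDef_of_posSemidef_det (nonneg_iff_posSemidef.mp (CFC.sqrt_nonneg P)) ?_, hsq⟩
  exact isUnit_of_mul_isUnit_left (hdet ▸ detU h)

lemma conj_posDef {P C : Matrix (Fin n) (Fin n) ℝ} (hP : P.PosDef)
    (hC : C.IsHermitian) (hd : IsUnit C.det) : (C * P * C).PosDef := by
  have h1 : (C * P * Cᴴ).PosSemidef := hP.posSemidef.mul_mul_conjTranspose_same C
  rw [hC.eq] at h1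
  refine posDef_of_posSemidef_det h1 ?_
  simpa [Matrix.det_mul] using (hd.mul (detU hP)).mul hd

lemma diag_pos {P : Matrix (Fin n) (Fin n) ℝ} (hP : P.PosDef) (i : Fin n) : 0 < P i i := by
  have hne : (Pi.single i 1 : Fin n → ℝ) ≠ 0 := by
    intro h
    have := congrFun h i
    simp at this
  have := hP.dotProduct_mulVec_pos hne
  simpa [Matrix.mulVec_single, single_dotProduct] using this

lemma trace_pos {P : Matrix (Fin n) (Fin n) ℝ} (hP : P.PosDef) (hn : 0 < n) :
    0 < P.trace := by
  rw [Matrix.trace]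
  refine Finset.sum_pos (fun i _ => diag_pos hP i) ?_
  simpa [Finset.univ_nonempty_iff] using Fin.pos_iff_nonempty.mp hn

lemma trace_mul_pos {P Q : Matrix (Fin n) (Fin n) ℝ} (hP : P.PosDef) (hQ : Q.PosDef)
    (hn : 0 < n) : 0 < (P * Q).trace := by
  obtain ⟨hRpd, hR⟩ := msqrt_posDef hP
  set R := msqrt P
  have h1 : (P * Q).trace = (R * Q * R).trace := by
    rw [← hR, Matrix.mul_assoc, Matrix.trace_mul_comm, Matrix.mul_assoc]
  rw [h1]
  exact trace_pos (conj_posDef hQ hRpd.isHermitian (detU hRpd)) hn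

lemma smul_posDef {P : Matrix (Fin n) (Fin n) ℝ} (hP : P.PosDef) {c : ℝ} (hc : 0 < c) :
    (c • P).PosDef := by
  refine posDef_iff_dotProduct_mulVec.mpr ⟨?_, fun v hv => ?_⟩
  · rw [Matrix.IsHermitian, conjTranspose_smul, hP.1.eq, star_trivial]
  · have := mul_pos hc (hP.dotProduct_mulVec_pos hv)
    simpa [Matrix.smul_mulVec, dotProduct_smul, smul_eq_mul] using this

lemma sum_posSemidef {ι : Type*} (s : Finset ι) (f : ι → Matrix (Fin n) (Fin n) ℝ)
    (h : ∀ i ∈ s, (f i).PosSemidef) : (∑ i ∈ s, f i).PosSemidef := by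
  induction s using Finset.cons_induction with
  | empty => simpa using Matrix.PosSemidef.zero
  | cons a s ha ih =>
      rw [Finset.sum_cons]
      exact (h a (Finset.mem_cons_self a s)).add
        (ih fun i hi => h i (Finset.mem_cons_of_mem hi))

lemma smul_posSemidef {P : Matrix (Fin n) (Fin n) ℝ} (hP : P.PosDef) {c : ℝ} (hc : 0 ≤ c) :
    (c • P).PosSemidef := by
  rcases hc.lt_or_eq with h | h
  · exact (smul_posDef hP h).posSemidef
  · simpa [← h] using Matrix.PosSemidef.zero

end Aux

theorem stmt5 {n m : ℕ} (A : Fin m → Matrix (Fin n) (Fin n) ℝ)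
    (hA : ∀ i, (A i).PosDef)
    (x : Fin m → ℝ) (hx : ∀ i, 0 ≤ x i)
    (B : Matrix (Fin n) (Fin n) ℝ) (hB : B.PosDef)
    (N M S : Matrix (Fin n) (Fin n) ℝ)
    (hN : N = ∑ i, x i • A i)
    (hM : M = ∑ i, (Matrix.trace (A i * B)) • A i)
    (hS : S = gmean B M⁻¹)
    (hfix : B = S * N * S) :
    M = N := by
  rcases Nat.eq_zero_or_pos n with rfl | hn
  · exact Subsingleton.elim M N
  rcases Nat.eq_zero_or_pos m with rfl | hm
  · simp [hM, hN]
  have i0 : Fin m := ⟨0, hm⟩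
  -- M is positive definite
  have hMpd : M.PosDef := by
    rw [hM, ← Finset.add_sum_erase _ _ (Finset.mem_univ i0)]
    refine Matrix.PosDef.add_posSemidef
      (Aux.smul_posDef (hA i0) (Aux.trace_mul_pos (hA i0) hB hn)) ?_
    exact Aux.sum_posSemidef _ _ fun i _ =>
      Aux.smul_posSemidef (hA i) (Aux.trace_mul_pos (hA i) hB hn).le
  have hMinv : M⁻¹.PosDef := hMpd.inv
  obtain ⟨hRpd, hR⟩ := Aux.msqrt_posDef hB
  set R := msqrt B with hRdef
  have hRu : IsUnit R.det := Aux.detU hRpd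
  -- msqrt B⁻¹ = R⁻¹
  have hRinv : msqrt B⁻¹ = R⁻¹ := by
    have h1 : (R⁻¹).PosSemidef := hRpd.inv.posSemidef
    have h2 : R⁻¹ ^ 2 = B⁻¹ := by
      rw [pow_two, ← Matrix.mul_inv_rev, hR]
    exact Aux.msqrt_eq_of_sq hB.inv.posSemidef h1 (by rw [← pow_two]; exact h2)
  -- the inner matrix
  have hCpd : (R⁻¹ * M⁻¹ * R⁻¹).PosDef :=
    Aux.conj_posDef hMinv hRpd.inv.isHermitian (Aux.detU hRpd.inv)
  obtain ⟨hTpd, hT⟩ := Aux.msqrt_posDef hCpd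
  set T := msqrt (R⁻¹ * M⁻¹ * R⁻¹) with hTdef
  have hSval : S = R * T * R := by
    rw [hS, gmean, ← hRdef, hRinv, ← hTdef]
  have hTu : IsUnit T.det := Aux.detU hTpd
  have hSu : IsUnit S.det := by
    rw [hSval]
    simpa [Matrix.det_mul] using (hRu.mul hTu).mul hRu
  -- key identity : S * B⁻¹ * S = M⁻¹
  have hkey : S * B⁻¹ * S = M⁻¹ := by
    have hBinv : B⁻¹ = R⁻¹ * R⁻¹ := by rw [← hR, Matrix.mul_inv_rev]
    rw [hSval, hBinv]
    have hRR : R * R⁻¹ = 1 := Matrix.mul_nonsing_inv R hRu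
    have hRR' : R⁻¹ * R = 1 := Matrix.nonsing_inv_mul R hRu
    calc R * T * R * (R⁻¹ * R⁻¹) * (R * T * R)
        = R * T * ((R * R⁻¹) * (R⁻¹ * R) * T) * R := by
          simp only [Matrix.mul_assoc]
      _ = R * (T * T) * R := by rw [hRR, hRR']; simp [Matrix.mul_assoc]
      _ = R * (R⁻¹ * M⁻¹ * R⁻¹) * R := by rw [hT]
      _ = (R * R⁻¹) * M⁻¹ * (R⁻¹ * R) := by simp only [Matrix.mul_assoc]
      _ = M⁻¹ := by rw [hRR, hRR']; simp
  -- conclude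
  have h1 : M = S⁻¹ * B * S⁻¹ := by
    have h := congrArg (·⁻¹) hkey
    simp only [Matrix.mul_inv_rev] at h
    rw [Matrix.nonsing_inv_nonsing_inv M (Aux.detU hMpd),
        Matrix.nonsing_inv_nonsing_inv B (Aux.detU hB)] at h
    rw [← h, Matrix.mul_assoc]
  have hSS : S * S⁻¹ = 1 := Matrix.mul_nonsing_inv S hSu
  have hSS' : S⁻¹ * S = 1 := Matrix.nonsing_inv_mul S hSu
  rw [h1, hfix]
  calc S⁻¹ * (S * N * S) * S⁻¹ = (S⁻¹ * S) * N * (S * S⁻¹) := by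
        simp only [Matrix.mul_assoc]
    _ = N := by rw [hSS, hSS']; simp
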